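/- The space ℂ[t,t⁻¹] ⊕ ℂ[t,t⁻¹]‾ modulo the span of the constant 1 in the first summand carries well-defined operators L_m·tⁿ = -n t^{m+n}, L_m·(t̄ᵏ) = -(k + m/2) t̄^{m+k}, H_m·t̄ᵏ = t̄^{m+k}, H_m·tⁿ = 0, G⁺_m·tⁿ = -2n t̄^{m+n}, G⁻_m·t̄ᵏ = t^{m+k}, G⁺_m·t̄ᵏ = G⁻_m·tⁿ = 0 (indices n ∈ ℤ\{0}, k ∈ ℤ), and these satisfy the centerless N=2 relation [L_m, L_n] = (m - n) L_{m+n} as operators on this quotient. -/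

import Mathlib

/-- The operator on `ℂ[t,t⁻¹]` sending the basis vector `tⁿ ↦ c n · t^{m+n}`. -/
noncomputable def wop (c : ℤ → ℂ) (m : ℤ) : (ℤ →₀ ℂ) →ₗ[ℂ] (ℤ →₀ ℂ) :=
  Finsupp.lsum ℂ fun n => c n • Finsupp.lsingle (m + n)

/-- The space `ℂ[t,t⁻¹] ⊕ ℂ[t,t⁻¹]‾`. -/
abbrev VV : Type := (ℤ →₀ ℂ) × (ℤ →₀ ℂ)

/-- `L_m : tⁿ ↦ -n t^{m+n}`, `t̄ᵏ ↦ -(k + m/2) t̄^{m+k}`. -/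
noncomputable def oL (m : ℤ) : VV →ₗ[ℂ] VV :=
  (wop (fun n => -(n : ℂ)) m).prodMap (wop (fun k => -((k : ℂ) + (m : ℂ) / 2)) m)

/-- `H_m : tⁿ ↦ 0`, `t̄ᵏ ↦ t̄^{m+k}`. -/
noncomputable def oH (m : ℤ) : VV →ₗ[ℂ] VV :=
  (0 : (ℤ →₀ ℂ) →ₗ[ℂ] (ℤ →₀ ℂ)).prodMap (wop (fun _ => 1) m)

/-- `G⁺_m : tⁿ ↦ -2n t̄^{m+n}`, `t̄ᵏ ↦ 0`. -/
noncomputable def oGp (m : ℤ) : VV →ₗ[ℂ] VV :=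
  LinearMap.prod 0 ((wop (fun n => -2 * (n : ℂ)) m).comp (LinearMap.fst ℂ _ _))

/-- `G⁻_m : t̄ᵏ ↦ t^{m+k}`, `tⁿ ↦ 0`. -/
noncomputable def oGm (m : ℤ) : VV →ₗ[ℂ] VV :=
  LinearMap.prod ((wop (fun _ => 1) m).comp (LinearMap.snd ℂ _ _)) 0

/-- The line `ℂ·1` in the first summand. -/
noncomputable def Kone : Submodule ℂ VV :=
  Submodule.span ℂ {((Finsupp.single (0 : ℤ) (1 : ℂ)), (0 : ℤ →₀ ℂ))}

lemma wop_single (c : ℤ → ℂ) (m k : ℤ) (x : ℂ) :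
    wop c m (Finsupp.single k x) = c k • Finsupp.single (m + k) x := by
  rw [wop, Finsupp.lsum_single, LinearMap.smul_apply, Finsupp.lsingle_apply]

lemma wop_comp (c d : ℤ → ℂ) (m n : ℤ) :
    (wop c m).comp (wop d n) = wop (fun k => d k * c (n + k)) (m + n) := by
  refine Finsupp.lhom_ext fun k x => ?_
  rw [LinearMap.comp_apply, wop_single, map_smul, wop_single, wop_single, smul_smul,
    mul_comm, add_assoc]

lemma wop_sub (c d : ℤ → ℂ) (m : ℤ) :
    wop c m - wop d m = wop (fun k => c k - d k) m := by
  refine Finsupp.lhom_ext fun k x => ?_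
  rw [LinearMap.sub_apply, wop_single, wop_single, wop_single, sub_smul]

lemma wop_smul (a : ℂ) (c : ℤ → ℂ) (m : ℤ) :
    a • wop c m = wop (fun k => a * c k) m := by
  refine Finsupp.lhom_ext fun k x => ?_
  rw [LinearMap.smul_apply, wop_single, wop_single, smul_smul]

lemma prodMap_sub {f₁ f₂ : (ℤ →₀ ℂ) →ₗ[ℂ] (ℤ →₀ ℂ)} {g₁ g₂ : (ℤ →₀ ℂ) →ₗ[ℂ] (ℤ →₀ ℂ)} :
    f₁.prodMap g₁ - f₂.prodMap g₂ = (f₁ - f₂).prodMap (g₁ - g₂) := by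
  apply LinearMap.ext; rintro ⟨x, y⟩
  simp [LinearMap.prodMap_apply, Prod.ext_iff]

lemma oL_comm (m n : ℤ) :
    (oL m).comp (oL n) - (oL n).comp (oL m) = ((m : ℂ) - n) • oL (m + n) := by
  unfold oL
  rw [LinearMap.prodMap_comp, LinearMap.prodMap_comp, prodMap_sub,
    ← LinearMap.prodMap_smul, wop_comp, wop_comp, wop_comp, wop_comp]
  rw [show n + m = m + n from add_comm n m, wop_sub, wop_sub, wop_smul, wop_smul]
  congr 1 <;>
    exact congrArg (fun c => wop c (m + n)) (funext fun k => by push_cast; ring)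

/-- The operators `L_m, H_m, G^±_m` descend to well-defined operators on the quotient
`(ℂ[t,t⁻¹] ⊕ ℂ[t,t⁻¹]‾)/ℂ·1` (they preserve `ℂ·1`), and on this quotient the `L_m`
satisfy the Witt relation `[L_m, L_n] = (m - n) L_{m+n}`. -/
theorem stmt15 :
    (∀ m : ℤ, Kone.map (oL m) ≤ Kone) ∧
    (∀ m : ℤ, Kone.map (oH m) ≤ Kone) ∧
    (∀ m : ℤ, Kone.map (oGp m) ≤ Kone) ∧
    (∀ m : ℤ, Kone.map (oGm m) ≤ Kone) ∧
    (∀ m n : ℤ,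
      (Kone.mkQ).comp ((oL m).comp (oL n) - (oL n).comp (oL m))
        = (Kone.mkQ).comp (((m : ℂ) - n) • oL (m + n))) := by
  have key : ∀ (f : VV →ₗ[ℂ] VV),
      f ((Finsupp.single (0 : ℤ) (1 : ℂ)), (0 : ℤ →₀ ℂ)) = 0 → Kone.map f ≤ Kone := by
    intro f hf
    rw [Kone, Submodule.map_span, Set.image_singleton, hf, Submodule.span_le]
    simp
  refine ⟨fun m => key _ ?_, fun m => key _ ?_, fun m => key _ ?_, fun m => key _ ?_,
    fun m n => by rw [oL_comm]⟩
  · simp only [oL, LinearMap.prodMap_apply, wop_single, map_zero, Int.cast_zero, neg_zero,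
      zero_smul, Prod.mk_eq_zero, and_self]
  · simp only [oH, LinearMap.prodMap_apply, LinearMap.zero_apply, map_zero, Prod.mk_eq_zero,
      and_self]
  · simp only [oGp, LinearMap.prod_apply, Function.prod, LinearMap.zero_apply, LinearMap.comp_apply,
      LinearMap.fst_apply, wop_single, Int.cast_zero, mul_zero, zero_smul, Prod.mk_eq_zero,
      and_self]
  · simp only [oGm, LinearMap.prod_apply, Function.prod, LinearMap.zero_apply, LinearMap.comp_apply,
      LinearMap.snd_apply, map_zero, Prod.mk_eq_zero, and_self]
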